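/- Let M be an abelian semigroup acting on a Hilbert space X by contractions T_m, let F be an invariant filter on M (for A ∈ F and n ∈ M, both nA and (A:n) = {m : mn ∈ A} belong to F), and let X₂ be the orthogonal complement of X₁ = { x : T_m*T_m x = T_m T_m* x = x for all m }. Suppose X₁ is invariant under the T_m and T_m*, so X₂ is as well. Then for every x ∈ X₂, the family (T_m x) converges weakly to 0 along F. -/

import Mathlib

open Filter Topology ContinuousLinearMap

lemma exists_weak_lim_aux {X : Type*} [NormedAddCommGroup X] [InnerProductSpace ℂ X]
    [CompleteSpace X] {M : Type*} (G : Ultrafilter M) (u : M → X) (C : ℝ)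
    (hC : ∀ m, ‖u m‖ ≤ C) :
    ∃ x₀ : X, ∀ y : X, Tendsto (fun m => (inner ℂ (u m) y : ℂ)) ↑G (𝓝 (inner ℂ x₀ y)) := by
  have hlim : ∀ y : X, ∃ c : ℂ, Tendsto (fun m => (inner ℂ (u m) y : ℂ)) ↑G (𝓝 c) := by
    intro y
    have hb : ∀ m, (inner ℂ (u m) y : ℂ) ∈ Metric.closedBall (0:ℂ) (C * ‖y‖) := by
      intro m
      simp only [Metric.mem_closedBall, dist_zero_right]
      calc ‖(inner ℂ (u m) y : ℂ)‖ ≤ ‖u m‖ * ‖y‖ := norm_inner_le_norm _ _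
        _ ≤ C * ‖y‖ := mul_le_mul_of_nonneg_right (hC m) (norm_nonneg y)
    obtain ⟨c, -, hc⟩ := (isCompact_closedBall (0:ℂ) (C * ‖y‖)).ultrafilter_le_nhds
      (G.map (fun m => (inner ℂ (u m) y : ℂ)))
      (by rw [Ultrafilter.coe_map, le_principal_iff]
          exact Filter.eventually_map.mpr (Filter.Eventually.of_forall hb))
    exact ⟨c, hc⟩
  choose ψ hψ using hlim
  have hadd : ∀ y z : X, ψ (y + z) = ψ y + ψ z := by
    intro y z
    refine tendsto_nhds_unique (hψ (y + z)) ?_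
    have := (hψ y).add (hψ z)
    simpa only [inner_add_right] using this
  have hsmul : ∀ (c : ℂ) (y : X), ψ (c • y) = c * ψ y := by
    intro c y
    refine tendsto_nhds_unique (hψ (c • y)) ?_
    have := (hψ y).const_mul c
    simpa only [inner_smul_right] using this
  have hbound : ∀ y : X, ‖ψ y‖ ≤ C * ‖y‖ := by
    intro y
    refine le_of_tendsto (hψ y).norm (Filter.Eventually.of_forall fun m => ?_)
    calc ‖(inner ℂ (u m) y : ℂ)‖ ≤ ‖u m‖ * ‖y‖ := norm_inner_le_norm _ _
      _ ≤ C * ‖y‖ := mul_le_mul_of_nonneg_right (hC m) (norm_nonneg y)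
  let ψL : X →ₗ[ℂ] ℂ :=
    { toFun := ψ, map_add' := hadd, map_smul' := hsmul }
  let ψC : X →L[ℂ] ℂ := ψL.mkContinuous C hbound
  refine ⟨(InnerProductSpace.toDual ℂ X).symm ψC, fun y => ?_⟩
  have h : (inner ℂ ((InnerProductSpace.toDual ℂ X).symm ψC) y : ℂ) = ψC y := by
    rw [← InnerProductSpace.toDual_apply_apply]
    simp
  rw [h]
  exact hψ y



set_option maxHeartbeats 1000000 in
/-- Weak stability on the orthogonal complement of the unitary part: if `M` is an
abelian semigroup acting on a Hilbert space `X` by contractions `T_m`, `F` is an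
invariant filter on `M`, `X₁ = {x : T_m* T_m x = T_m T_m* x = x for all m}` is
invariant under all `T_m` and `T_m*`, and `x` is orthogonal to `X₁`, then `(T_m x)`
converges weakly to `0` along `F`. -/
theorem weak_stability_on_complement
    {X : Type*} [NormedAddCommGroup X] [InnerProductSpace ℂ X] [CompleteSpace X]
    {M : Type*} [CommSemigroup M]
    (T : M → X →L[ℂ] X)
    (hmulT : ∀ m n : M, T (m * n) = (T m).comp (T n))
    (hcontr : ∀ m : M, ‖T m‖ ≤ 1)
    (F : Filter M) [F.NeBot]
    (hinv : ∀ A ∈ F, ∀ n : M,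
      ((fun m => n * m) '' A ∈ F) ∧ ({m : M | m * n ∈ A} ∈ F))
    (hX₁inv : ∀ m : M,
      ∀ x ∈ {x : X | ∀ k : M, adjoint (T k) (T k x) = x ∧ T k (adjoint (T k) x) = x},
      T m x ∈ {x : X | ∀ k : M, adjoint (T k) (T k x) = x ∧ T k (adjoint (T k) x) = x} ∧
      adjoint (T m) x ∈
        {x : X | ∀ k : M, adjoint (T k) (T k x) = x ∧ T k (adjoint (T k) x) = x})
    (x : X)
    (hx : ∀ y ∈ {x : X | ∀ k : M, adjoint (T k) (T k x) = x ∧ T k (adjoint (T k) x) = x},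
      (inner ℂ x y : ℂ) = 0) :
    ∀ y : X, Tendsto (fun m => (inner ℂ (T m x) y : ℂ)) F (𝓝 0) := by
  have hM : Nonempty M := nonempty_of_neBot F
  -- basic contraction facts
  have hTle : ∀ (n : M) (z : X), ‖T n z‖ ≤ ‖z‖ := fun n z => by
    calc ‖T n z‖ ≤ ‖T n‖ * ‖z‖ := (T n).le_opNorm z
      _ ≤ 1 * ‖z‖ := mul_le_mul_of_nonneg_right (hcontr n) (norm_nonneg z)
      _ = ‖z‖ := one_mul _
  have hTale : ∀ (n : M) (z : X), ‖adjoint (T n) z‖ ≤ ‖z‖ := fun n z => by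
    calc ‖adjoint (T n) z‖ ≤ ‖adjoint (T n)‖ * ‖z‖ := (adjoint (T n)).le_opNorm z
      _ ≤ 1 * ‖z‖ := by
          refine mul_le_mul_of_nonneg_right ?_ (norm_nonneg z)
          rw [LinearIsometryEquiv.norm_map adjoint (T n)]; exact hcontr n
      _ = ‖z‖ := one_mul _
  set L : ℝ := ⨅ m, ‖T m x‖ with hLdef
  have hbdd : BddBelow (Set.range fun m => ‖T m x‖) := ⟨0, by rintro r ⟨m, rfl⟩; exact norm_nonneg _⟩
  have hLle : ∀ m, L ≤ ‖T m x‖ := fun m => ciInf_le hbdd m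
  have hL0 : 0 ≤ L := le_ciInf fun m => norm_nonneg _
  have hmono : ∀ n m : M, ‖T (n * m) x‖ ≤ ‖T m x‖ := by
    intro n m
    rw [hmulT]
    exact hTle n (T m x)
  -- norm converges to L along F
  have hTnorm : Tendsto (fun m => ‖T m x‖) F (𝓝 L) := by
    rw [tendsto_order]
    constructor
    · intro a ha
      exact Filter.Eventually.of_forall fun m => lt_of_lt_of_le ha (hLle m)
    · intro b hb
      obtain ⟨m₀, hm₀⟩ := exists_lt_of_ciInf_lt hb
      have hS : (fun m => m₀ * m) '' Set.univ ∈ F := (hinv Set.univ Filter.univ_mem m₀).1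
      filter_upwards [hS]
      rintro _ ⟨k, -, rfl⟩
      calc ‖T (m₀ * k) x‖ = ‖T (k * m₀) x‖ := by rw [mul_comm]
        _ ≤ ‖T m₀ x‖ := hmono k m₀
        _ < b := hm₀
  intro y
  rcases eq_or_lt_of_le hL0 with hLz | hLpos
  · -- case L = 0 : norm convergence to 0
    have h0 : Tendsto (fun m => ‖T m x‖) F (𝓝 0) := by rw [hLz]; exact hTnorm
    rw [tendsto_zero_iff_norm_tendsto_zero]
    refine squeeze_zero (fun m => norm_nonneg _) (fun m => norm_inner_le_norm _ _) ?_
    simpa using h0.mul_const ‖y‖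
  · -- case L > 0
    have hTn : ∀ n : M, Tendsto (fun m => ‖T n (T m x)‖) F (𝓝 L) := by
      intro n
      refine tendsto_of_tendsto_of_tendsto_of_le_of_le tendsto_const_nhds hTnorm
        (fun m => ?_) (fun m => hTle n (T m x))
      have h := hLle (n * m)
      rwa [hmulT n m] at h
    have hTsn : ∀ n : M, Tendsto (fun m => ‖adjoint (T n) (T m x)‖) F (𝓝 L) := by
      intro n
      rw [Metric.tendsto_nhds]
      intro ε hε
      have hupper : ∀ᶠ m in F, ‖T m x‖ < L + ε :=
        (tendsto_order.1 hTnorm).2 (L + ε) (by linarith)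
      obtain ⟨m₀, hm₀⟩ := exists_lt_of_ciInf_lt (show L < L + ε by linarith)
      have hA₁ : (fun m => m₀ * m) '' Set.univ ∈ F := (hinv _ Filter.univ_mem m₀).1
      have hS : (fun m => n * m) '' ((fun m => m₀ * m) '' Set.univ) ∈ F := (hinv _ hA₁ n).1
      filter_upwards [hS, hupper] with m hm hup
      rw [Real.dist_eq, abs_lt]
      have hAle : ‖adjoint (T n) (T m x)‖ ≤ ‖T m x‖ := hTale n (T m x)
      constructor
      · -- lower bound
        rcases hm with ⟨a, ⟨b, -, rfl⟩, rfl⟩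
        set z := T (m₀ * b) x with hz
        have hz1 : T (n * (m₀ * b)) x = T n z := by rw [hmulT]; rfl
        have hz2 : ‖z‖ ≤ ‖T m₀ x‖ := by
          have hzz : z = T b (T m₀ x) := by
            rw [hz, mul_comm m₀ b, hmulT]; rfl
          rw [hzz]; exact hTle b _
        have hkey : ‖T (n * (m₀ * b)) x‖ ^ 2
            ≤ ‖adjoint (T n) (T (n * (m₀ * b)) x)‖ * ‖z‖ := by
          rw [hz1]
          have h1 : (‖T n z‖ : ℝ) ^ 2 = RCLike.re (inner ℂ (T n z) (T n z) : ℂ) :=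
            (inner_self_eq_norm_sq (𝕜 := ℂ) (T n z)).symm
          have h2 : (inner ℂ (adjoint (T n) (T n z)) z : ℂ) = inner ℂ (T n z) (T n z) :=
            adjoint_inner_left _ _ _
          calc ‖T n z‖ ^ 2 = RCLike.re (inner ℂ (adjoint (T n) (T n z)) z : ℂ) := by
                rw [h2, ← h1]
            _ ≤ ‖(inner ℂ (adjoint (T n) (T n z)) z : ℂ)‖ := RCLike.re_le_norm _
            _ ≤ ‖adjoint (T n) (T n z)‖ * ‖z‖ := norm_inner_le_norm _ _
        have hLm : L ≤ ‖T (n * (m₀ * b)) x‖ := hLle _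
        have hA0 : (0:ℝ) ≤ ‖adjoint (T n) (T (n * (m₀ * b)) x)‖ := norm_nonneg _
        have hzlt : ‖z‖ < L + ε := lt_of_le_of_lt hz2 hm₀
        nlinarith [sq_nonneg ε,
          mul_le_mul_of_nonneg_left hzlt.le hA0]
      · -- upper bound
        calc ‖adjoint (T n) (T m x)‖ - L ≤ ‖T m x‖ - L := by linarith
          _ < ε := by linarith
    -- difference tends to zero in norm
    have hnormdiff : ∀ (d : M → X) (g : M → ℝ),
        (∀ m, ‖d m‖ ^ 2 ≤ ‖T m x‖ ^ 2 - g m ^ 2) → (∀ m, 0 ≤ g m) →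
        Tendsto g F (𝓝 L) → Tendsto d F (𝓝 0) := by
      intro d g hle hg0 hgL
      rw [tendsto_zero_iff_norm_tendsto_zero]
      have hsq : Tendsto (fun m => ‖T m x‖ ^ 2 - g m ^ 2) F (𝓝 0) := by
        have := (hTnorm.pow 2).sub (hgL.pow 2)
        simpa using this
      have h2 : Tendsto (fun m => ‖d m‖ ^ 2) F (𝓝 0) :=
        squeeze_zero (fun m => sq_nonneg _) hle hsq
      have h3 := (Real.continuous_sqrt.tendsto 0).comp h2
      simpa [Function.comp_def, Real.sqrt_sq (norm_nonneg _)] using h3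
    have hdiff1 : ∀ n : M,
        Tendsto (fun m => adjoint (T n) (T n (T m x)) - T m x) F (𝓝 0) := by
      intro n
      refine hnormdiff _ (fun m => ‖T n (T m x)‖) (fun m => ?_) (fun m => norm_nonneg _)
        (hTn n)
      set z := T m x
      have hns := norm_sub_sq (𝕜 := ℂ) (adjoint (T n) (T n z)) z
      have h2 : (inner ℂ (adjoint (T n) (T n z)) z : ℂ) = inner ℂ (T n z) (T n z) :=
        adjoint_inner_left _ _ _
      have h3 : RCLike.re (inner ℂ (adjoint (T n) (T n z)) z : ℂ) = ‖T n z‖ ^ 2 := by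
        rw [h2]; exact inner_self_eq_norm_sq (𝕜 := ℂ) (T n z)
      have h4 : ‖adjoint (T n) (T n z)‖ ≤ ‖T n z‖ := hTale n _
      have h5 : ‖adjoint (T n) (T n z)‖ ^ 2 ≤ ‖T n z‖ ^ 2 := by
        nlinarith [norm_nonneg (adjoint (T n) (T n z)), norm_nonneg (T n z)]
      rw [hns, h3]
      nlinarith
    have hdiff2 : ∀ n : M,
        Tendsto (fun m => T n (adjoint (T n) (T m x)) - T m x) F (𝓝 0) := by
      intro n
      refine hnormdiff _ (fun m => ‖adjoint (T n) (T m x)‖) (fun m => ?_)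
        (fun m => norm_nonneg _) (hTsn n)
      set z := T m x
      have hns := norm_sub_sq (𝕜 := ℂ) (T n (adjoint (T n) z)) z
      have h2 : (inner ℂ (T n (adjoint (T n) z)) z : ℂ)
          = inner ℂ (adjoint (T n) z) (adjoint (T n) z) :=
        (adjoint_inner_right (T n) (adjoint (T n) z) z).symm
      have h3 : RCLike.re (inner ℂ (T n (adjoint (T n) z)) z : ℂ)
          = ‖adjoint (T n) z‖ ^ 2 := by
        rw [h2]; exact inner_self_eq_norm_sq (𝕜 := ℂ) (adjoint (T n) z)
      have h4 : ‖T n (adjoint (T n) z)‖ ≤ ‖adjoint (T n) z‖ := hTle n _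
      have h5 : ‖T n (adjoint (T n) z)‖ ^ 2 ≤ ‖adjoint (T n) z‖ ^ 2 := by
        nlinarith [norm_nonneg (T n (adjoint (T n) z)), norm_nonneg (adjoint (T n) z)]
      rw [hns, h3]
      nlinarith
    -- ultrafilter argument
    rw [tendsto_iff_ultrafilter]
    intro G hG
    obtain ⟨x₀, hx₀⟩ := exists_weak_lim_aux G (fun m => T m x) ‖x‖ (fun m => hTle m x)
    suffices hzero : x₀ = 0 by
      have := hx₀ y
      rw [hzero] at this
      simpa using this
    -- x₀ ∈ X₁
    have hmem : x₀ ∈ {x : X | ∀ k : M,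
        adjoint (T k) (T k x) = x ∧ T k (adjoint (T k) x) = x} := by
      intro k
      constructor
      · apply ext_inner_right ℂ
        intro v
        have e1 : (inner ℂ (adjoint (T k) (T k x₀)) v : ℂ)
            = inner ℂ x₀ (adjoint (T k) (T k v)) := by
          rw [adjoint_inner_left, ← adjoint_inner_right]
        rw [e1]
        have t1 := hx₀ (adjoint (T k) (T k v))
        have t2 : Tendsto (fun m => (inner ℂ (T m x) (adjoint (T k) (T k v)) : ℂ))
            ↑G (𝓝 (inner ℂ x₀ v)) := by
          have hd : Tendsto
              (fun m => (inner ℂ (adjoint (T k) (T k (T m x)) - T m x) v : ℂ))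
              ↑G (𝓝 0) := by
            have hdd := Filter.Tendsto.inner (𝕜 := ℂ) ((hdiff1 k).mono_left hG)
              (tendsto_const_nhds (x := v))
            simpa [inner_sub_left] using hdd
          have hsum := hd.add (hx₀ v)
          have heq : (fun m => (inner ℂ (adjoint (T k) (T k (T m x)) - T m x) v : ℂ)
              + inner ℂ (T m x) v)
              = fun m => (inner ℂ (T m x) (adjoint (T k) (T k v)) : ℂ) := by
            funext m
            rw [inner_sub_left, adjoint_inner_left, ← adjoint_inner_right]
            ring
          rw [heq] at hsum
          simpa using hsum
        exact tendsto_nhds_unique t1 t2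
      · apply ext_inner_right ℂ
        intro v
        have e1 : (inner ℂ (T k (adjoint (T k) x₀)) v : ℂ)
            = inner ℂ x₀ (T k (adjoint (T k) v)) := by
          rw [← adjoint_inner_right, adjoint_inner_left]
        rw [e1]
        have t1 := hx₀ (T k (adjoint (T k) v))
        have t2 : Tendsto (fun m => (inner ℂ (T m x) (T k (adjoint (T k) v)) : ℂ))
            ↑G (𝓝 (inner ℂ x₀ v)) := by
          have hd : Tendsto
              (fun m => (inner ℂ (T k (adjoint (T k) (T m x)) - T m x) v : ℂ))
              ↑G (𝓝 0) := by
            have hdd := Filter.Tendsto.inner (𝕜 := ℂ) ((hdiff2 k).mono_left hG)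
              (tendsto_const_nhds (x := v))
            simpa [inner_sub_left] using hdd
          have hsum := hd.add (hx₀ v)
          have heq : (fun m => (inner ℂ (T k (adjoint (T k) (T m x)) - T m x) v : ℂ)
              + inner ℂ (T m x) v)
              = fun m => (inner ℂ (T m x) (T k (adjoint (T k) v)) : ℂ) := by
            funext m
            rw [inner_sub_left, ← adjoint_inner_right, adjoint_inner_left]
            ring
          rw [heq] at hsum
          simpa using hsum
        exact tendsto_nhds_unique t1 t2
    -- x₀ is orthogonal to itself
    have hin : (inner ℂ x₀ x₀ : ℂ) = 0 := by
      have hc : ∀ m, (inner ℂ (T m x) x₀ : ℂ) = 0 := by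
        intro m
        rw [← adjoint_inner_right]
        exact hx _ (hX₁inv m x₀ hmem).2
      have h0 : Tendsto (fun m => (inner ℂ (T m x) x₀ : ℂ)) ↑G (𝓝 0) := by
        simp only [hc]
        exact tendsto_const_nhds
      exact tendsto_nhds_unique (hx₀ x₀) h0
    exact inner_self_eq_zero.mp hin
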